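/- arXiv:1301.6268 — 2 statements merged into one kernel-verified Lean document; each statement's English description precedes it below -/
import Mathlib

section
/- There exist absolute constants c, C > 0 with the following property. Let A be an n×n matrix with ‖A‖_∞ = max_{i,j} |a_{i,j}| ≤ 1, and let G be an n×n random matrix with i.i.d. standard Gaussian N(0,1) entries. Then for any linear subspaces E, F ⊆ ℝⁿ and any s ≥ 1, P( ‖P_F (A⊙G) restricted to E‖ ≥ c s (√(dim E) + √(dim F)) ) ≤ exp( −C s² (dim E + dim F) ), where P_F is the orthogonal projection onto F and the norm is the operator norm of the map E → ℝⁿ given by x ↦ P_F (A⊙G) x. -/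
open MeasureTheory ProbabilityTheory Matrix Filter
open scoped ENNReal NNReal Classical

noncomputable section

/-- A bipartite graph with left vertices `Fin m` and right vertices `Fin n`,
given by the edge relation `E j i` (`j` a left vertex, `i` a right vertex),
is `(δ, κ)`-broadly connected: every right vertex has degree at least `δ m`,
every left vertex has degree at least `δ n`, and every set `J` of left vertices
has at least `min ((1+κ)|J|) n` broadly connected neighbors, i.e. right
vertices connected to at least `⌊(δ/2)|J|⌋` vertices of `J`. -/
def BroadlyConnected (δ κ : ℝ) {m n : ℕ} (E : Fin m → Fin n → Prop) : Prop :=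
  (∀ i : Fin n, δ * m ≤ (Finset.univ.filter fun j : Fin m => E j i).card) ∧
  (∀ j : Fin m, δ * n ≤ (Finset.univ.filter fun i : Fin n => E j i).card) ∧
  ∀ J : Finset (Fin m),
    min ((1 + κ) * J.card) n ≤
      (Finset.univ.filter fun i : Fin n =>
        ⌊(δ / 2) * (J.card : ℝ)⌋ ≤ ((J.filter fun j => E j i).card : ℤ)).card

/-- `A` is the (0-1) adjacency matrix of a `(δ, κ)`-broadly connected
`n × n` bipartite graph (rows are left vertices). -/
def IsBCAdjacency (δ κ : ℝ) {n : ℕ} (A : Matrix (Fin n) (Fin n) ℝ) : Prop :=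
  (∀ i j, A i j = 0 ∨ A i j = 1) ∧ BroadlyConnected δ κ (fun j i => A j i ≠ 0)

/-- The entries of the random matrix `G` are i.i.d. standard Gaussian `N(0,1)`. -/
def IsStdGaussianMatrix {Ω : Type*} [MeasureSpace Ω] {n m : ℕ}
    (G : Ω → Matrix (Fin n) (Fin m) ℝ) : Prop :=
  iIndepFun (fun p : Fin n × Fin m => fun ω => G ω p.1 p.2) ℙ ∧
  ∀ p : Fin n × Fin m, Measure.map (fun ω => G ω p.1 p.2) ℙ = gaussianReal 0 1

/-- The entries of the random matrix `W` are independent Gaussians,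
`w i j ~ N(B i j, (A i j)^2)`. -/
def IsGaussianMatrix {Ω : Type*} [MeasureSpace Ω] {n m : ℕ}
    (W : Ω → Matrix (Fin n) (Fin m) ℝ) (B A : Matrix (Fin n) (Fin m) ℝ) : Prop :=
  iIndepFun (fun p : Fin n × Fin m => fun ω => W ω p.1 p.2) ℙ ∧
  ∀ p : Fin n × Fin m, Measure.map (fun ω => W ω p.1 p.2) ℙ
    = gaussianReal (B p.1 p.2) ⟨(A p.1 p.2) ^ 2, sq_nonneg _⟩

/-- The `k`-th largest singular value of an `n × m` matrix, via the
Courant–Fischer max-min characterization. -/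
def sVal {n m : ℕ} (W : Matrix (Fin n) (Fin m) ℝ) (k : ℕ) : ℝ :=
  sSup {r : ℝ | 0 ≤ r ∧ ∃ E : Submodule ℝ (EuclideanSpace ℝ (Fin m)),
    Module.finrank ℝ E = k ∧ ∀ x ∈ E, r * ‖x‖ ≤ ‖toEuclideanLin W x‖}

/-- The ℓ₂ → ℓ₂ operator norm of a matrix. -/
def matOpNorm {n m : ℕ} (W : Matrix (Fin n) (Fin m) ℝ) : ℝ :=
  ‖LinearMap.toContinuousLinearMap (toEuclideanLin W)‖

/-- Unit vectors with at most `u * m` nonzero coordinates. -/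
def SparseVec (m : ℕ) (u : ℝ) : Set (EuclideanSpace ℝ (Fin m)) :=
  {x | ‖x‖ = 1 ∧ ((Finset.univ.filter fun j => x j ≠ 0).card : ℝ) ≤ u * m}

/-- Compressible unit vectors: within distance `v` of a `u`-sparse unit vector. -/
def CompVec (m : ℕ) (u v : ℝ) : Set (EuclideanSpace ℝ (Fin m)) :=
  {x | ‖x‖ = 1 ∧ ∃ y ∈ SparseVec m u, ‖x - y‖ ≤ v}

/-- The squared Barvinok–Godsil–Gutman determinant `det(A_{1/2} ⊙ M)^2`. -/
def bggEstimate {n : ℕ} (A M : Matrix (Fin n) (Fin n) ℝ) : ℝ :=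
  ((A.map Real.sqrt).hadamard M).det ^ 2

instance matrixMeasurableSpace {n m : ℕ} : MeasurableSpace (Matrix (Fin n) (Fin m) ℝ) :=
  inferInstanceAs (MeasurableSpace (Fin n → Fin m → ℝ))

/-- The operator norm of `x ↦ P_F (M x)` restricted to the subspace `E`. -/
def projRestrictedNorm {n : ℕ} (F E : Submodule ℝ (EuclideanSpace ℝ (Fin n)))
    (M : Matrix (Fin n) (Fin n) ℝ) : ℝ :=
  sSup {t : ℝ | ∃ x ∈ E, ‖x‖ ≤ 1 ∧ t = ‖(F.orthogonalProjectionOnto (toEuclideanLin M x) : F)‖}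

open Metric
set_option maxHeartbeats 1000000
lemma gauss_density_shift (t x : ℝ) :
    Real.exp (t * x) * gaussianPDFReal 0 1 x = Real.exp (t^2/2) * gaussianPDFReal t 1 x := by
  simp only [gaussianPDFReal_def, NNReal.coe_one, mul_one]
  rw [mul_left_comm, ← Real.exp_add, mul_left_comm, ← Real.exp_add]
  congr 2
  ring

lemma gpdf_nn_meas (μ : ℝ) : Measurable (fun x => (gaussianPDFReal μ 1 x).toNNReal) :=
  (measurable_gaussianPDFReal μ 1).real_toNNReal

lemma gaussianReal_eq_withDensity (μ : ℝ) :
    gaussianReal μ 1 = volume.withDensity (fun x => ((gaussianPDFReal μ 1 x).toNNReal : ℝ≥0∞)) := by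
  rw [gaussianReal_of_var_ne_zero μ one_ne_zero, gaussianPDF_def]
  congr 1

lemma gauss_smul_eq (t μ : ℝ) (x : ℝ) :
    (gaussianPDFReal μ 1 x).toNNReal • Real.exp (t * x)
      = gaussianPDFReal μ 1 x * Real.exp (t * x) := by
  rw [NNReal.smul_def, Real.coe_toNNReal _ (gaussianPDFReal_nonneg μ 1 x), smul_eq_mul]

lemma key_integrable (t : ℝ) :
    Integrable (fun x => Real.exp (t * x)) (gaussianReal 0 1) := by
  rw [gaussianReal_eq_withDensity 0, integrable_withDensity_iff_integrable_smul (gpdf_nn_meas 0)]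
  refine ((integrable_gaussianPDFReal t 1).const_mul (Real.exp (t^2/2))).congr
    (Filter.Eventually.of_forall fun x => ?_)
  show Real.exp (t^2/2) * gaussianPDFReal t 1 x = (gaussianPDFReal 0 1 x).toNNReal • Real.exp (t * x)
  rw [gauss_smul_eq, mul_comm (gaussianPDFReal 0 1 x), gauss_density_shift]

lemma key_integral (t : ℝ) :
    ∫ x, Real.exp (t * x) ∂(gaussianReal 0 1) = Real.exp (t^2/2) := by
  rw [gaussianReal_eq_withDensity 0, integral_withDensity_eq_integral_smul (gpdf_nn_meas 0)]
  have h : ∀ x : ℝ, (gaussianPDFReal 0 1 x).toNNReal • Real.exp (t * x)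
      = Real.exp (t^2/2) * gaussianPDFReal t 1 x := fun x => by
    rw [gauss_smul_eq, mul_comm (gaussianPDFReal 0 1 x), gauss_density_shift]
  rw [integral_congr_ae (Filter.Eventually.of_forall h), integral_const_mul,
    integral_gaussianPDFReal_eq_one t one_ne_zero, mul_one]

lemma inner_eq_sum {n : ℕ} (M : Matrix (Fin n) (Fin n) ℝ) (x y : EuclideanSpace ℝ (Fin n)) :
    inner (𝕜 := ℝ) y (toEuclideanLin M x) = ∑ q : Fin n × Fin n, y q.1 * M q.1 q.2 * x q.2 := by
  rw [PiLp.inner_apply, Fintype.sum_prod_type]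
  refine Finset.sum_congr rfl fun i _ => ?_
  simp only [toEuclideanLin_apply, RCLike.inner_apply, conj_trivial]
  have : (M *ᵥ x.ofLp) i
      = ∑ j, M i j * x j := rfl
  rw [this, Finset.sum_mul]
  exact Finset.sum_congr rfl fun j _ => by ring

lemma inner_hadamard_sum {n : ℕ} (A M : Matrix (Fin n) (Fin n) ℝ)
    (x y : EuclideanSpace ℝ (Fin n)) :
    inner (𝕜 := ℝ) y (toEuclideanLin (A.hadamard M) x)
      = ∑ q : Fin n × Fin n, (y q.1 * A q.1 q.2 * x q.2) * M q.1 q.2 := by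
  rw [inner_eq_sum]
  exact Finset.sum_congr rfl fun q _ => by
    rw [Matrix.hadamard_apply]; ring

lemma sum_sq_norm {n : ℕ} (x : EuclideanSpace ℝ (Fin n)) : ∑ j, x j ^ 2 = ‖x‖ ^ 2 := by
  rw [← real_inner_self_eq_norm_sq, PiLp.inner_apply]
  exact Finset.sum_congr rfl fun j _ => by
    simp [RCLike.inner_apply, conj_trivial]

lemma coef_bound {n : ℕ} (A : Matrix (Fin n) (Fin n) ℝ) (hA : ∀ i j, |A i j| ≤ 1)
    (x y : EuclideanSpace ℝ (Fin n)) (hx : ‖x‖ ≤ 1) (hy : ‖y‖ ≤ 1) :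
    ∑ q : Fin n × Fin n, (y q.1 * A q.1 q.2 * x q.2) ^ 2 ≤ 1 := by
  have h1 : ∀ q : Fin n × Fin n, (y q.1 * A q.1 q.2 * x q.2) ^ 2 ≤ y q.1 ^2 * x q.2 ^2 := by
    intro q
    have hAq := hA q.1 q.2
    have : A q.1 q.2 ^ 2 ≤ 1 := by nlinarith [abs_nonneg (A q.1 q.2), sq_abs (A q.1 q.2)]
    nlinarith [sq_nonneg (y q.1 * x q.2), sq_nonneg (y q.1), sq_nonneg (x q.2)]
  calc ∑ q : Fin n × Fin n, (y q.1 * A q.1 q.2 * x q.2) ^ 2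
      ≤ ∑ q : Fin n × Fin n, y q.1 ^2 * x q.2 ^2 :=
        Finset.sum_le_sum fun q _ => h1 q
    _ = (∑ i, y i ^2) * (∑ j, x j ^2) := by
        rw [Finset.sum_mul_sum, Fintype.sum_prod_type]
    _ ≤ 1 * 1 := by
        have hx2 : ∑ j, x j ^2 ≤ 1 := by
          rw [sum_sq_norm]; nlinarith [norm_nonneg x]
        have hy2 : ∑ i, y i ^2 ≤ 1 := by
          rw [sum_sq_norm]; nlinarith [norm_nonneg y]
        have : (0:ℝ) ≤ ∑ j, x j ^2 := Finset.sum_nonneg fun j _ => sq_nonneg _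
        have : (0:ℝ) ≤ ∑ i, y i ^2 := Finset.sum_nonneg fun i _ => sq_nonneg _
        nlinarith
    _ = 1 := mul_one 1

lemma aemeasurable_of_gaussian_law {Ω : Type} [MeasureSpace Ω] {X : Ω → ℝ}
    (h : Measure.map X ℙ = gaussianReal 0 1) : AEMeasurable X ℙ := by
  by_contra hc
  rw [Measure.map_of_not_aemeasurable hc] at h
  have h1 : (gaussianReal 0 1) Set.univ = 1 := measure_univ
  rw [← h] at h1
  simp at h1

lemma iIndepFun_ae_congr {Ω : Type} [MeasureSpace Ω] {ι : Type} [Countable ι]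
    {X Y : ι → Ω → ℝ}
    (h : iIndepFun X ℙ) (hXY : ∀ i, X i =ᵐ[ℙ] Y i) :
    iIndepFun Y ℙ := by
  rw [iIndepFun_iff_measure_inter_preimage_eq_mul] at h ⊢
  intro S sets hsets
  have hae : ∀ᵐ ω ∂(ℙ : Measure Ω), ∀ i, X i ω = Y i ω := ae_all_iff.mpr hXY
  have hInter : (⋂ i ∈ S, Y i ⁻¹' sets i) =ᵐ[ℙ] (⋂ i ∈ S, X i ⁻¹' sets i) := by
    filter_upwards [hae] with ω hω
    show (ω ∈ ⋂ i ∈ S, Y i ⁻¹' sets i) = (ω ∈ ⋂ i ∈ S, X i ⁻¹' sets i)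
    apply eq_iff_iff.mpr
    simp only [Set.mem_iInter, Set.mem_preimage]
    constructor
    · intro hmem i hi; rw [hω i]; exact hmem i hi
    · intro hmem i hi; rw [← hω i]; exact hmem i hi
  rw [measure_congr hInter, h S hsets]
  refine Finset.prod_congr rfl fun i _ => ?_
  refine measure_congr ?_
  filter_upwards [hXY i] with ω hω
  show (ω ∈ X i ⁻¹' sets i) = (ω ∈ Y i ⁻¹' sets i)
  apply eq_iff_iff.mpr
  simp only [Set.mem_preimage, hω]

lemma mgf_of_gaussian {Ω : Type} [MeasureSpace Ω] {X : Ω → ℝ}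
    (hX : AEMeasurable X ℙ) (h_law : Measure.map X ℙ = gaussianReal 0 1) (u : ℝ) :
    mgf X ℙ u = Real.exp (u^2/2) := by
  rw [mgf, ← key_integral u, ← h_law,
    integral_map hX (Continuous.aestronglyMeasurable (by continuity))]

lemma integrable_exp_of_gaussian {Ω : Type} [MeasureSpace Ω] {X : Ω → ℝ}
    (hX : AEMeasurable X ℙ) (h_law : Measure.map X ℙ = gaussianReal 0 1) (u : ℝ) :
    Integrable (fun ω => Real.exp (u * X ω)) ℙ := by
  have := (integrable_map_measure (Continuous.aestronglyMeasurable (f := fun x => Real.exp (u * x))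
    (by continuity)) hX).mp (by rw [h_law]; exact key_integrable u)
  exact this

lemma chernoff_gaussian_sum {Ω : Type} [MeasureSpace Ω] [IsProbabilityMeasure (ℙ : Measure Ω)]
    {ι : Type} [Fintype ι] {X : ι → Ω → ℝ}
    (h_indep : iIndepFun X ℙ)
    (h_meas : ∀ i, Measurable (X i))
    (h_law : ∀ i, Measure.map (X i) ℙ = gaussianReal 0 1)
    (a : ι → ℝ) (ha : ∑ i, (a i)^2 ≤ 1) {t : ℝ} (ht : 0 < t) :
    ℙ {ω | t ≤ ∑ i, a i * X i ω} ≤ ENNReal.ofReal (Real.exp (-(t^2)/2)) := by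
  set Y : ι → Ω → ℝ := fun i ω => a i * X i ω with hY
  have hYmeas : ∀ i, Measurable (Y i) := fun i => (h_meas i).const_mul (a i)
  have hYindep : iIndepFun Y ℙ :=
    h_indep.comp (fun i x => a i * x) (fun i => (measurable_id.const_mul (a i)))
  have hYint : ∀ i, Integrable (fun ω => Real.exp (t * Y i ω)) ℙ := by
    intro i
    have := integrable_exp_of_gaussian (h_meas i).aemeasurable (h_law i) (t * a i)
    refine this.congr (Filter.Eventually.of_forall fun ω => ?_)
    simp only [hY]; ring_nf
  have hmgfY : ∀ i, mgf (Y i) ℙ t = Real.exp ((t * a i)^2/2) := by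
    intro i
    rw [← mgf_of_gaussian (h_meas i).aemeasurable (h_law i) (t * a i)]
    unfold mgf
    congr 1; funext ω; simp only [hY]; ring_nf
  have hS : {ω : Ω | t ≤ ∑ i, a i * X i ω} = {ω : Ω | t ≤ (∑ i, Y i) ω} := by
    ext ω; simp [hY, Finset.sum_apply]
  have hint : Integrable (fun ω => Real.exp (t * (∑ i, Y i) ω)) ℙ :=
    hYindep.integrable_exp_mul_sum hYmeas (fun i _ => hYint i)
  have hchern := measure_ge_le_exp_mul_mgf (μ := ℙ) (X := ∑ i, Y i) t ht.le hint
  have hmgfS : mgf (∑ i, Y i) ℙ t ≤ Real.exp (t^2/2) := by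
    rw [hYindep.mgf_sum hYmeas]
    calc (∏ i, mgf (Y i) ℙ t) = ∏ i, Real.exp ((t * a i)^2/2) := by
          exact Finset.prod_congr rfl fun i _ => hmgfY i
      _ = Real.exp (∑ i, (t * a i)^2/2) := by rw [Real.exp_sum]
      _ ≤ Real.exp (t^2/2) := by
          apply Real.exp_le_exp.mpr
          have : ∑ i, (t * a i)^2/2 = (t^2/2) * ∑ i, (a i)^2 := by
            rw [Finset.mul_sum]; exact Finset.sum_congr rfl fun i _ => by ring
          rw [this]
          nlinarith [sq_nonneg t]
  have hbound : (ℙ {ω | t ≤ (∑ i, Y i) ω}).toReal ≤ Real.exp (-(t^2)/2) := by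
    refine hchern.trans ?_
    calc Real.exp (-t * t) * mgf (∑ i, Y i) ℙ t ≤ Real.exp (-t * t) * Real.exp (t^2/2) := by
          exact mul_le_mul_of_nonneg_left hmgfS (Real.exp_nonneg _)
      _ = Real.exp (-(t^2)/2) := by rw [← Real.exp_add]; ring_nf
  rw [hS]
  calc ℙ {ω | t ≤ (∑ i, Y i) ω}
      = ENNReal.ofReal ((ℙ {ω | t ≤ (∑ i, Y i) ω}).toReal) :=
        (ENNReal.ofReal_toReal (measure_ne_top _ _)).symm
    _ ≤ ENNReal.ofReal (Real.exp (-(t^2)/2)) := ENNReal.ofReal_le_ofReal hbound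

lemma sep_card_bound {d : ℕ} (S : Finset (EuclideanSpace ℝ (Fin d)))
    (hS1 : ∀ x ∈ S, ‖x‖ ≤ 1)
    (hS2 : ∀ x ∈ S, ∀ y ∈ S, x ≠ y → 1/4 < dist x y) :
    S.card ≤ 9 ^ d := by
  rcases Nat.eq_zero_or_pos d with rfl | hd
  · have : Subsingleton (EuclideanSpace ℝ (Fin 0)) := inferInstance
    simpa using Finset.card_le_one.mpr fun a _ b _ => Subsingleton.elim a b
  have : Nontrivial (EuclideanSpace ℝ (Fin d)) := by
    apply Module.nontrivial_of_finrank_pos (R := ℝ)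
    rw [finrank_euclideanSpace_fin]
    exact hd
  have hdisj : (S : Set (EuclideanSpace ℝ (Fin d))).PairwiseDisjoint
      (fun x => ball x (1/8)) := by
    intro x hx y hy hxy
    exact ball_disjoint_ball (by linarith [hS2 x hx y hy hxy])
  have hsum := measure_biUnion_finset hdisj (fun x _ => measurableSet_ball)
    (μ := (volume : Measure (EuclideanSpace ℝ (Fin d))))
  have hsub : (⋃ x ∈ S, ball x (1/8)) ⊆ ball (0 : EuclideanSpace ℝ (Fin d)) (9/8) := by
    intro y hy
    simp only [Set.mem_iUnion] at hy
    obtain ⟨x, hx, hxy⟩ := hy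
    have h1 : dist y x < 1/8 := mem_ball.mp hxy
    have h2 : dist x 0 ≤ 1 := by simpa [dist_zero_right] using hS1 x hx
    exact mem_ball.mpr (lt_of_le_of_lt (dist_triangle y x 0) (by linarith))
  set V := volume (ball (0 : EuclideanSpace ℝ (Fin d)) 1) with hV
  have hVpos : 0 < V := measure_ball_pos _ _ (by norm_num)
  have hVfin : V ≠ ⊤ := measure_ball_lt_top.ne
  have hball : ∀ x : EuclideanSpace ℝ (Fin d),
      volume (ball x (1/8)) = ENNReal.ofReal ((1/8 : ℝ) ^ d) * V := by
    intro x
    rw [hV, Measure.addHaar_ball volume x (by norm_num : (0:ℝ) ≤ 1/8),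
      finrank_euclideanSpace_fin]
  have hbig : volume (ball (0 : EuclideanSpace ℝ (Fin d)) (9/8))
      = ENNReal.ofReal ((9/8 : ℝ) ^ d) * V := by
    rw [hV, Measure.addHaar_ball volume _ (by norm_num : (0:ℝ) ≤ 9/8),
      finrank_euclideanSpace_fin]
  have hle : (S.card : ℝ≥0∞) * (ENNReal.ofReal ((1/8 : ℝ) ^ d) * V)
      ≤ ENNReal.ofReal ((9/8 : ℝ) ^ d) * V := by
    calc (S.card : ℝ≥0∞) * (ENNReal.ofReal ((1/8 : ℝ) ^ d) * V)
          = ∑ x ∈ S, ENNReal.ofReal ((1/8 : ℝ) ^ d) * V := by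
            rw [Finset.sum_const, nsmul_eq_mul]
        _ = ∑ x ∈ S, volume (ball x (1/8)) := by
            exact Finset.sum_congr rfl fun x _ => (hball x).symm
        _ = volume (⋃ x ∈ S, ball x (1/8)) := hsum.symm
        _ ≤ volume (ball (0 : EuclideanSpace ℝ (Fin d)) (9/8)) := measure_mono hsub
        _ = ENNReal.ofReal ((9/8 : ℝ) ^ d) * V := hbig
  have h18pos : (0:ℝ) < (1/8 : ℝ)^d := by positivity
  have hcancel : (S.card : ℝ≥0∞) * ENNReal.ofReal ((1/8 : ℝ) ^ d)
      ≤ ENNReal.ofReal ((9/8 : ℝ) ^ d) := by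
    rw [← ENNReal.mul_le_mul_iff_left hVpos.ne' hVfin, mul_assoc]
    exact hle
  have h9 : ENNReal.ofReal ((9/8 : ℝ) ^ d)
      = ENNReal.ofReal ((9:ℝ)^d) * ENNReal.ofReal ((1/8 : ℝ) ^ d) := by
    rw [← ENNReal.ofReal_mul (by positivity)]
    congr 1
    rw [← mul_pow]; norm_num
  have hfinal : (S.card : ℝ≥0∞) ≤ ENNReal.ofReal ((9:ℝ)^d) := by
    rw [← ENNReal.mul_le_mul_iff_left (c := ENNReal.ofReal ((1/8 : ℝ) ^ d))
      (by simp [ENNReal.ofReal_pos, h18pos]) ENNReal.ofReal_ne_top]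
    rw [← h9]; exact hcancel
  have : ((9:ℝ)^d) = ((9^d : ℕ) : ℝ) := by push_cast; ring
  rw [this, ENNReal.ofReal_natCast] at hfinal
  exact_mod_cast hfinal

lemma exists_euclid_net (d : ℕ) :
    ∃ N : Finset (EuclideanSpace ℝ (Fin d)),
      (∀ x ∈ N, ‖x‖ ≤ 1) ∧ N.card ≤ 9 ^ d ∧
      ∀ x : EuclideanSpace ℝ (Fin d), ‖x‖ ≤ 1 → ∃ y ∈ N, ‖x - y‖ ≤ 1/4 := by
  classical
  set P : ℕ → Prop := fun k => ∃ S : Finset (EuclideanSpace ℝ (Fin d)),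
    S.card = k ∧ (∀ x ∈ S, ‖x‖ ≤ 1) ∧ (∀ x ∈ S, ∀ y ∈ S, x ≠ y → 1/4 < dist x y) with hP
  have hP0 : P 0 := ⟨∅, by simp⟩
  have hPle : ∀ k, P k → k ≤ 9 ^ d := by
    rintro k ⟨S, rfl, h1, h2⟩
    exact sep_card_bound S h1 h2
  have hPm : P (Nat.findGreatest P (9 ^ d)) :=
    Nat.findGreatest_spec (Nat.zero_le _) hP0
  obtain ⟨S, hcard, h1, h2⟩ := hPm
  refine ⟨S, h1, hcard ▸ Nat.findGreatest_le _, ?_⟩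
  intro x hx
  by_contra hcon
  push_neg at hcon
  have hxS : x ∉ S := fun hxS => by
    have h0 := hcon x hxS
    rw [sub_self, norm_zero] at h0
    linarith
  have hsep : ∀ y ∈ S, 1/4 < dist x y := by
    intro y hy
    have := hcon y hy
    rw [dist_eq_norm]
    linarith
  have hP' : P (Nat.findGreatest P (9 ^ d) + 1) := by
    refine ⟨insert x S, ?_, ?_, ?_⟩
    · rw [Finset.card_insert_of_notMem hxS, hcard]
    · intro z hz
      rcases Finset.mem_insert.mp hz with rfl | hz
      · exact hx
      · exact h1 z hz
    · intro z hz w hw hzw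
      rcases Finset.mem_insert.mp hz with rfl | hz'
      · rcases Finset.mem_insert.mp hw with rfl | hw'
        · exact absurd rfl hzw
        · exact hsep w hw'
      · rcases Finset.mem_insert.mp hw with rfl | hw'
        · rw [dist_comm]; exact hsep z hz'
        · exact h2 z hz' w hw' hzw
  exact Nat.findGreatest_is_greatest (Nat.lt_succ_self _) (hPle _ hP') hP'

lemma exists_subspace_net {n : ℕ} (V : Submodule ℝ (EuclideanSpace ℝ (Fin n))) :
    ∃ N : Finset (EuclideanSpace ℝ (Fin n)),
      (∀ x ∈ N, x ∈ V ∧ ‖x‖ ≤ 1) ∧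
      (N.card : ℝ) ≤ 9 ^ (Module.finrank ℝ V) ∧
      ∀ x ∈ V, ‖x‖ ≤ 1 → ∃ y ∈ N, ‖x - y‖ ≤ 1/4 := by
  classical
  set d := Module.finrank ℝ V with hd
  obtain ⟨N₀, hN1, hN2, hN3⟩ := exists_euclid_net d
  set ψ := (stdOrthonormalBasis ℝ V).repr with hψ
  refine ⟨N₀.image (fun w => ((ψ.symm w : V) : EuclideanSpace ℝ (Fin n))), ?_, ?_, ?_⟩
  · intro x hx
    obtain ⟨w, hw, rfl⟩ := Finset.mem_image.mp hx
    refine ⟨SetLike.coe_mem _, ?_⟩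
    have h0 : ‖((ψ.symm w : V) : EuclideanSpace ℝ (Fin n))‖ = ‖ψ.symm w‖ := rfl
    rw [h0, ψ.symm.norm_map]
    exact hN1 w hw
  · calc ((N₀.image _).card : ℝ) ≤ (N₀.card : ℝ) := by
          exact_mod_cast Finset.card_image_le
      _ ≤ 9 ^ d := by exact_mod_cast hN2
  · intro x hxV hx
    obtain ⟨y, hy, hxy⟩ := hN3 (ψ ⟨x, hxV⟩) (by rw [ψ.norm_map]; exact hx)
    refine ⟨((ψ.symm y : V) : EuclideanSpace ℝ (Fin n)),
      Finset.mem_image_of_mem _ hy, ?_⟩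
    have : x - ((ψ.symm y : V) : EuclideanSpace ℝ (Fin n))
        = (((⟨x, hxV⟩ - ψ.symm y : V)) : EuclideanSpace ℝ (Fin n)) := by
      simp
    have h0 : ‖(((⟨x, hxV⟩ - ψ.symm y : V)) : EuclideanSpace ℝ (Fin n))‖
        = ‖(⟨x, hxV⟩ - ψ.symm y : V)‖ := rfl
    rw [this, h0, ← ψ.norm_map (⟨x, hxV⟩ - ψ.symm y), map_sub, ψ.apply_symm_apply]
    exact hxy


namespace SNG

variable {n : ℕ}

def K (M : Matrix (Fin n) (Fin n) ℝ) : ℝ :=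
  ‖LinearMap.toContinuousLinearMap (toEuclideanLin M)‖

lemma norm_toEuclideanLin_le (M : Matrix (Fin n) (Fin n) ℝ) (x : EuclideanSpace ℝ (Fin n)) :
    ‖toEuclideanLin M x‖ ≤ K M * ‖x‖ :=
  (LinearMap.toContinuousLinearMap (toEuclideanLin M)).le_opNorm x

lemma inner_le_K (M : Matrix (Fin n) (Fin n) ℝ) (x y : EuclideanSpace ℝ (Fin n))
    (hx : ‖x‖ ≤ 1) (hy : ‖y‖ ≤ 1) :
    inner (𝕜 := ℝ) y (toEuclideanLin M x) ≤ K M := by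
  have h1 := real_inner_le_norm y (toEuclideanLin M x)
  have h2 := norm_toEuclideanLin_le M x
  have hK : 0 ≤ K M := norm_nonneg _
  nlinarith [norm_nonneg x, norm_nonneg y, norm_nonneg (toEuclideanLin M x)]

lemma net_bound (M : Matrix (Fin n) (Fin n) ℝ)
    (E F : Submodule ℝ (EuclideanSpace ℝ (Fin n)))
    (NE NF : Finset (EuclideanSpace ℝ (Fin n)))
    (hNE : ∀ x ∈ NE, x ∈ E ∧ ‖x‖ ≤ 1)
    (hNF : ∀ y ∈ NF, y ∈ F ∧ ‖y‖ ≤ 1)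
    (hNEcov : ∀ x ∈ E, ‖x‖ ≤ 1 → ∃ y ∈ NE, ‖x - y‖ ≤ 1/4)
    (hNFcov : ∀ x ∈ F, ‖x‖ ≤ 1 → ∃ y ∈ NF, ‖x - y‖ ≤ 1/4)
    {thr : ℝ} (hthr : 0 < thr)
    (h : thr ≤ projRestrictedNorm F E M) :
    ∃ x ∈ NE, ∃ y ∈ NF, thr / 4 ≤ inner (𝕜 := ℝ) y (toEuclideanLin M x) := by
  -- the set T₀ defining projRestrictedNorm
  set T₀ : Set ℝ := {t : ℝ | ∃ x ∈ E, ‖x‖ ≤ 1 ∧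
    t = ‖(F.orthogonalProjectionOnto (toEuclideanLin M x) : F)‖} with hT₀
  have hT₀ne : T₀.Nonempty := ⟨_, ⟨0, E.zero_mem, by simp, rfl⟩⟩
  have hT₀bdd : BddAbove T₀ := by
    refine ⟨K M, ?_⟩
    rintro t ⟨x, hxE, hx1, rfl⟩
    have h1 : ‖((F.orthogonalProjectionOnto (toEuclideanLin M x) : F) :
        EuclideanSpace ℝ (Fin n))‖ ≤ ‖toEuclideanLin M x‖ := by
      have := Submodule.orthogonalProjectionOnto_norm_le F
      calc ‖((F.orthogonalProjectionOnto (toEuclideanLin M x) : F) : EuclideanSpace ℝ (Fin n))‖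
          = ‖F.orthogonalProjectionOnto (toEuclideanLin M x)‖ := rfl
        _ ≤ ‖F.orthogonalProjectionOnto‖ * ‖toEuclideanLin M x‖ :=
            (F.orthogonalProjectionOnto).le_opNorm _
        _ ≤ 1 * ‖toEuclideanLin M x‖ := by
            exact mul_le_mul_of_nonneg_right this (norm_nonneg _)
        _ = ‖toEuclideanLin M x‖ := one_mul _
    calc ‖(F.orthogonalProjectionOnto (toEuclideanLin M x) : F)‖
        ≤ ‖toEuclideanLin M x‖ := h1
      _ ≤ K M * ‖x‖ := norm_toEuclideanLin_le M x
      _ ≤ K M * 1 := by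
          exact mul_le_mul_of_nonneg_left hx1 (norm_nonneg _)
      _ = K M := mul_one _
  -- extract a good x and normalized y
  obtain ⟨t, htT, htgt⟩ : ∃ t ∈ T₀, thr / 2 < t :=
    exists_lt_of_lt_csSup hT₀ne (lt_of_lt_of_le (by linarith) h)
  obtain ⟨x, hxE, hx1, rfl⟩ := htT
  set u : EuclideanSpace ℝ (Fin n) :=
    ((F.orthogonalProjectionOnto (toEuclideanLin M x) : F) : EuclideanSpace ℝ (Fin n)) with hu
  have huF : u ∈ F := SetLike.coe_mem _
  have hunorm : ‖(F.orthogonalProjectionOnto (toEuclideanLin M x) : F)‖ = ‖u‖ := rfl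
  rw [hunorm] at htgt
  have hupos : 0 < ‖u‖ := lt_of_le_of_lt (by linarith) htgt
  set y : EuclideanSpace ℝ (Fin n) := ‖u‖⁻¹ • u with hy
  have hyF : y ∈ F := F.smul_mem _ huF
  have hynorm : ‖y‖ = 1 := by
    rw [hy, norm_smul, norm_inv, norm_norm, inv_mul_cancel₀ hupos.ne']
  have hinner_u : inner (𝕜 := ℝ) u (toEuclideanLin M x) = ‖u‖ ^ 2 := by
    have hperp : toEuclideanLin M x - u ∈ Fᗮ :=
      Submodule.sub_starProjection_mem_orthogonal (K := F) (toEuclideanLin M x)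
    have h0 : inner (𝕜 := ℝ) u (toEuclideanLin M x - u) = 0 :=
      (Submodule.mem_orthogonal F _).mp hperp u huF
    have : inner (𝕜 := ℝ) u (toEuclideanLin M x)
        = inner (𝕜 := ℝ) u u + inner (𝕜 := ℝ) u (toEuclideanLin M x - u) := by
      rw [← inner_add_right]; congr 1; abel
    rw [this, h0, add_zero, real_inner_self_eq_norm_sq]
  have hinner_y : inner (𝕜 := ℝ) y (toEuclideanLin M x) = ‖u‖ := by
    rw [hy, real_inner_smul_left, hinner_u]
    field_simp
  -- the bilinear sup
  set T : Set ℝ := {t : ℝ | ∃ a ∈ E, ‖a‖ ≤ 1 ∧ ∃ b ∈ F, ‖b‖ ≤ 1 ∧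
    t = inner (𝕜 := ℝ) b (toEuclideanLin M a)} with hT
  have hTne : T.Nonempty := ⟨_, ⟨0, E.zero_mem, by simp, 0, F.zero_mem, by simp, rfl⟩⟩
  have hTbdd : BddAbove T := by
    refine ⟨K M, ?_⟩
    rintro t ⟨a, haE, ha1, b, hbF, hb1, rfl⟩
    exact inner_le_K M a b ha1 hb1
  set sstar := sSup T with hsstar
  have hzero_mem : (0:ℝ) ∈ T := ⟨0, E.zero_mem, by simp, 0, F.zero_mem, by simp, by simp⟩
  have hsnonneg : 0 ≤ sstar := le_csSup hTbdd hzero_mem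
  have hs_ge : thr / 2 ≤ sstar := by
    refine le_trans htgt.le (le_csSup hTbdd ?_)
    exact ⟨x, hxE, hx1, y, hyF, hynorm.le, hinner_y.symm⟩
  -- scaling bound
  have habs : ∀ a ∈ E, ∀ b ∈ F,
      |inner (𝕜 := ℝ) b (toEuclideanLin M a)| ≤ sstar * (‖a‖ * ‖b‖) := by
    intro a haE b hbF
    rcases eq_or_ne a 0 with rfl | ha0
    · simp
    rcases eq_or_ne b 0 with rfl | hb0
    · simp
    have hna : 0 < ‖a‖ := norm_pos_iff.mpr ha0
    have hnb : 0 < ‖b‖ := norm_pos_iff.mpr hb0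
    set a' := ‖a‖⁻¹ • a with ha'
    set b' := ‖b‖⁻¹ • b with hb'
    have ha'E : a' ∈ E := E.smul_mem _ haE
    have hb'F : b' ∈ F := F.smul_mem _ hbF
    have ha'n : ‖a'‖ = 1 := by
      rw [ha', norm_smul, norm_inv, norm_norm, inv_mul_cancel₀ hna.ne']
    have hb'n : ‖b'‖ = 1 := by
      rw [hb', norm_smul, norm_inv, norm_norm, inv_mul_cancel₀ hnb.ne']
    have hmem1 : inner (𝕜 := ℝ) b' (toEuclideanLin M a') ≤ sstar :=
      le_csSup hTbdd ⟨a', ha'E, ha'n.le, b', hb'F, hb'n.le, rfl⟩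
    have hmem2 : inner (𝕜 := ℝ) b' (toEuclideanLin M (-a')) ≤ sstar :=
      le_csSup hTbdd ⟨-a', E.neg_mem ha'E, by rw [norm_neg]; exact ha'n.le,
        b', hb'F, hb'n.le, rfl⟩
    rw [LinearMap.map_neg, inner_neg_right] at hmem2
    have habs' : |inner (𝕜 := ℝ) b' (toEuclideanLin M a')| ≤ sstar :=
      abs_le.mpr ⟨by linarith, hmem1⟩
    have hdecomp : inner (𝕜 := ℝ) b (toEuclideanLin M a)
        = (‖a‖ * ‖b‖) * inner (𝕜 := ℝ) b' (toEuclideanLin M a') := by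
      rw [ha', hb', LinearMap.map_smul, real_inner_smul_left, real_inner_smul_right]
      field_simp
    rw [hdecomp, abs_mul, abs_of_nonneg (by positivity : (0:ℝ) ≤ ‖a‖ * ‖b‖)]
    calc ‖a‖ * ‖b‖ * |inner (𝕜 := ℝ) b' (toEuclideanLin M a')|
        ≤ ‖a‖ * ‖b‖ * sstar := by
          exact mul_le_mul_of_nonneg_left habs' (by positivity)
      _ = sstar * (‖a‖ * ‖b‖) := by ring
  -- nets are nonempty
  obtain ⟨x₀', hx₀'⟩ := hNEcov 0 E.zero_mem (by simp)
  obtain ⟨y₀', hy₀'⟩ := hNFcov 0 F.zero_mem (by simp)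
  have hprodne : (NE ×ˢ NF).Nonempty := ⟨(x₀', y₀'), Finset.mem_product.mpr ⟨hx₀'.1, hy₀'.1⟩⟩
  have hkey : sstar ≤ (NE ×ˢ NF).sup' hprodne
      (fun p => inner (𝕜 := ℝ) p.2 (toEuclideanLin M p.1)) + sstar / 2 := by
    refine csSup_le hTne ?_
    rintro t ⟨a, haE, ha1, b, hbF, hb1, rfl⟩
    obtain ⟨a₀, ha₀N, ha₀⟩ := hNEcov a haE ha1
    obtain ⟨b₀, hb₀N, hb₀⟩ := hNFcov b hbF hb1
    have ha₀E : a₀ ∈ E := (hNE a₀ ha₀N).1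
    have hb₀F : b₀ ∈ F := (hNF b₀ hb₀N).1
    have ha₀1 : ‖a₀‖ ≤ 1 := (hNE a₀ ha₀N).2
    have hdec : inner (𝕜 := ℝ) b (toEuclideanLin M a)
        = inner (𝕜 := ℝ) b₀ (toEuclideanLin M a₀)
          + inner (𝕜 := ℝ) b (toEuclideanLin M (a - a₀))
          + inner (𝕜 := ℝ) (b - b₀) (toEuclideanLin M a₀) := by
      rw [LinearMap.map_sub, inner_sub_right, inner_sub_left]
      ring
    have h1 : inner (𝕜 := ℝ) b₀ (toEuclideanLin M a₀) ≤ (NE ×ˢ NF).sup' hprodne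
        (fun p => inner (𝕜 := ℝ) p.2 (toEuclideanLin M p.1)) :=
      Finset.le_sup' (f := fun p : EuclideanSpace ℝ (Fin n) × EuclideanSpace ℝ (Fin n) =>
          inner (𝕜 := ℝ) p.2 (toEuclideanLin M p.1))
        (b := (a₀, b₀)) (Finset.mem_product.mpr ⟨ha₀N, hb₀N⟩)
    have h2 : inner (𝕜 := ℝ) b (toEuclideanLin M (a - a₀)) ≤ sstar / 4 := by
      have := habs (a - a₀) (E.sub_mem haE ha₀E) b hbF
      have hle : sstar * (‖a - a₀‖ * ‖b‖) ≤ sstar * (1/4) := by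
        apply mul_le_mul_of_nonneg_left _ hsnonneg
        calc ‖a - a₀‖ * ‖b‖ ≤ (1/4) * 1 := by
              apply mul_le_mul ha₀ hb1 (norm_nonneg _) (by norm_num)
          _ = 1/4 := by norm_num
      have := (le_abs_self _).trans (this.trans hle)
      linarith
    have h3 : inner (𝕜 := ℝ) (b - b₀) (toEuclideanLin M a₀) ≤ sstar / 4 := by
      have := habs a₀ ha₀E (b - b₀) (F.sub_mem hbF hb₀F)
      have hle : sstar * (‖a₀‖ * ‖b - b₀‖) ≤ sstar * (1/4) := by
        apply mul_le_mul_of_nonneg_left _ hsnonneg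
        calc ‖a₀‖ * ‖b - b₀‖ ≤ 1 * (1/4) := by
              apply mul_le_mul ha₀1 hb₀ (norm_nonneg _) (by norm_num)
          _ = 1/4 := by norm_num
      have := (le_abs_self _).trans (this.trans hle)
      linarith
    rw [hdec]
    linarith
  have hsup : thr / 4 ≤ (NE ×ˢ NF).sup' hprodne
      (fun p => inner (𝕜 := ℝ) p.2 (toEuclideanLin M p.1)) := by linarith
  obtain ⟨p, hp, hpeq⟩ := Finset.exists_mem_eq_sup' hprodne
    (fun p => inner (𝕜 := ℝ) p.2 (toEuclideanLin M p.1))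
  exact ⟨p.1, (Finset.mem_product.mp hp).1, p.2, (Finset.mem_product.mp hp).2,
    hsup.trans_eq hpeq⟩

end SNG


lemma final_numeric (dE dF cardP : ℕ) (s : ℝ) (hs : 1 ≤ s)
    (hcard : (cardP : ℝ) ≤ 9 ^ dE * 9 ^ dF) :
    (cardP : ℝ) * Real.exp (-((4 * s * (Real.sqrt dE + Real.sqrt dF)) ^ 2) / 2)
      ≤ Real.exp (-1 * s ^ 2 * ((dE : ℝ) + dF)) := by
  have hk0 : (0:ℝ) ≤ (dE : ℝ) + dF := by positivity
  have hsq : (dE : ℝ) + dF ≤ (Real.sqrt dE + Real.sqrt dF) ^ 2 := by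
    have h1 : Real.sqrt dE ^ 2 = (dE:ℝ) := Real.sq_sqrt (by positivity)
    have h2 : Real.sqrt dF ^ 2 = (dF:ℝ) := Real.sq_sqrt (by positivity)
    nlinarith [Real.sqrt_nonneg (dE:ℝ), Real.sqrt_nonneg (dF:ℝ)]
  have hs2 : 1 ≤ s ^ 2 := by nlinarith
  have ht : 8 * s^2 * ((dE : ℝ) + dF) ≤ ((4 * s * (Real.sqrt dE + Real.sqrt dF)) ^ 2) / 2 := by
    have hexp : (4 * s * (Real.sqrt dE + Real.sqrt dF)) ^ 2
        = 16 * s^2 * (Real.sqrt dE + Real.sqrt dF) ^ 2 := by ring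
    rw [hexp]
    nlinarith [sq_nonneg s]
  have hlog : Real.log 9 ≤ 7 := by
    have h1 : (4.5:ℝ) ≤ Real.exp 3.5 := by nlinarith [Real.add_one_le_exp (3.5:ℝ)]
    have h2 : (9:ℝ) ≤ Real.exp 7 := by
      have he : Real.exp 7 = Real.exp 3.5 * Real.exp 3.5 := by
        rw [← Real.exp_add]; norm_num
      nlinarith
    calc Real.log 9 ≤ Real.log (Real.exp 7) := Real.log_le_log (by norm_num) h2
      _ = 7 := Real.log_exp 7
  have hcard2 : (cardP:ℝ) ≤ Real.exp (((dE : ℝ) + dF) * Real.log 9) := by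
    have h9 : (9:ℝ)^dE * 9^dF = 9^(dE+dF) := (pow_add 9 dE dF).symm
    have h10 : Real.exp (((dE : ℝ) + dF) * Real.log 9) = (9:ℝ)^(dE+dF) := by
      have hc : ((dE : ℝ) + dF) = ((dE + dF : ℕ) : ℝ) := by push_cast; ring
      rw [hc, Real.exp_nat_mul, Real.exp_log (by norm_num : (0:ℝ) < 9)]
    rw [h10, ← h9]
    exact hcard
  calc (cardP : ℝ) * Real.exp (-((4 * s * (Real.sqrt dE + Real.sqrt dF)) ^ 2) / 2)
      ≤ Real.exp (((dE : ℝ) + dF) * Real.log 9)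
          * Real.exp (-(8 * s^2 * ((dE : ℝ) + dF))) := by
        apply mul_le_mul hcard2 _ (Real.exp_nonneg _) (Real.exp_nonneg _)
        apply Real.exp_le_exp.mpr
        linarith
    _ = Real.exp (((dE : ℝ) + dF) * Real.log 9 - 8 * s^2 * ((dE : ℝ) + dF)) := by
        rw [← Real.exp_add]; ring_nf
    _ ≤ Real.exp (-1 * s ^ 2 * ((dE : ℝ) + dF)) := by
        apply Real.exp_le_exp.mpr
        have h7 : Real.log 9 ≤ 7 * s^2 := by nlinarith
        have := mul_le_mul_of_nonneg_left h7 hk0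
        nlinarith

/-- Lemma (norm of a Gaussian matrix with bounded entries restricted to
subspaces): with ‖A‖_∞ ≤ 1 and `G` standard Gaussian,
`‖P_F (A ⊙ G) : E → ℝⁿ‖ ≤ c s (√dim E + √dim F)` except with probability
`exp(-C s² (dim E + dim F))`. -/
theorem subspace_norm_gaussian :
    ∃ c C : ℝ, 0 < c ∧ 0 < C ∧
      ∀ (n : ℕ) (Ω : Type) [MeasureSpace Ω], IsProbabilityMeasure (ℙ : Measure Ω) →
      ∀ (A : Matrix (Fin n) (Fin n) ℝ), (∀ i j, |A i j| ≤ 1) →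
      ∀ (G : Ω → Matrix (Fin n) (Fin n) ℝ), IsStdGaussianMatrix G →
      ∀ (E F : Submodule ℝ (EuclideanSpace ℝ (Fin n))) (s : ℝ), 1 ≤ s →
        ℙ {ω : Ω | c * s * (Real.sqrt (Module.finrank ℝ E) + Real.sqrt (Module.finrank ℝ F))
              ≤ projRestrictedNorm F E (A.hadamard (G ω))}
          ≤ ENNReal.ofReal
              (Real.exp (-C * s ^ 2 * ((Module.finrank ℝ E : ℝ) + Module.finrank ℝ F))) := by
  classical
  refine ⟨16, 1, by norm_num, by norm_num, ?_⟩
  intro n Ω _ hprob A hA G hG E F s hs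
  haveI := hprob
  by_cases hdim : Module.finrank ℝ E = 0 ∧ Module.finrank ℝ F = 0
  · have h0 : (-1 : ℝ) * s ^ 2 * ((Module.finrank ℝ E : ℝ) + Module.finrank ℝ F) = 0 := by
      rw [hdim.1, hdim.2]; norm_num
    rw [h0, Real.exp_zero, ENNReal.ofReal_one]
    exact prob_le_one
  · -- main case
    have hpos : 0 < Real.sqrt (Module.finrank ℝ E) + Real.sqrt (Module.finrank ℝ F) := by
      rcases not_and_or.mp hdim with h | h
      · have h1 : 0 < Real.sqrt (Module.finrank ℝ E) :=
          Real.sqrt_pos.mpr (by exact_mod_cast Nat.pos_of_ne_zero h)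
        linarith [Real.sqrt_nonneg ((Module.finrank ℝ F : ℝ))]
      · have h1 : 0 < Real.sqrt (Module.finrank ℝ F) :=
          Real.sqrt_pos.mpr (by exact_mod_cast Nat.pos_of_ne_zero h)
        linarith [Real.sqrt_nonneg ((Module.finrank ℝ E : ℝ))]
    have hspos : 0 < s := lt_of_lt_of_le one_pos hs
    set thr : ℝ := 16 * s * (Real.sqrt (Module.finrank ℝ E) + Real.sqrt (Module.finrank ℝ F))
      with hthr_def
    have hthr : 0 < thr := by
      rw [hthr_def]; positivity
    obtain ⟨NE, hNE, hNEcard, hNEcov⟩ := exists_subspace_net E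
    obtain ⟨NF, hNF, hNFcard, hNFcov⟩ := exists_subspace_net F
    set X : Fin n × Fin n → Ω → ℝ := fun p ω => G ω p.1 p.2 with hX
    have hXae : ∀ p, AEMeasurable (X p) ℙ := fun p => aemeasurable_of_gaussian_law (hG.2 p)
    set X' : Fin n × Fin n → Ω → ℝ := fun p => (hXae p).mk (X p) with hX'
    have hX'meas : ∀ p, Measurable (X' p) := fun p => (hXae p).measurable_mk
    have hXeq : ∀ p, X p =ᵐ[ℙ] X' p := fun p => (hXae p).ae_eq_mk
    have hX'law : ∀ p, Measure.map (X' p) ℙ = gaussianReal 0 1 := fun p => by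
      rw [← Measure.map_congr (hXeq p)]; exact hG.2 p
    have hX'indep : iIndepFun X' ℙ :=
      iIndepFun_ae_congr hG.1 hXeq
    -- event inclusion
    have hsub : {ω : Ω | thr ≤ projRestrictedNorm F E (A.hadamard (G ω))}
        ⊆ ⋃ p ∈ NE ×ˢ NF, {ω : Ω | thr/4
            ≤ ∑ q : Fin n × Fin n, (p.2 q.1 * A q.1 q.2 * p.1 q.2) * X q ω} := by
      intro ω hω
      obtain ⟨x, hx, y, hy, hle⟩ := SNG.net_bound (A.hadamard (G ω)) E F NE NF hNE hNF
        hNEcov hNFcov hthr hω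
      rw [inner_hadamard_sum] at hle
      have hpmem : (x, y) ∈ NE ×ˢ NF := Finset.mem_product.mpr ⟨hx, hy⟩
      exact Set.mem_biUnion hpmem hle
    refine le_trans (measure_mono hsub) ?_
    refine le_trans (measure_biUnion_finset_le _ _) ?_
    have hper : ∀ p ∈ NE ×ˢ NF,
        ℙ {ω : Ω | thr/4 ≤ ∑ q : Fin n × Fin n, (p.2 q.1 * A q.1 q.2 * p.1 q.2) * X q ω}
          ≤ ENNReal.ofReal (Real.exp (-((thr/4)^2)/2)) := by
      intro p hp
      have hmem := Finset.mem_product.mp hp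
      have hx1 : ‖p.1‖ ≤ 1 := (hNE p.1 hmem.1).2
      have hy1 : ‖p.2‖ ≤ 1 := (hNF p.2 hmem.2).2
      have hmc : ℙ {ω : Ω | thr/4 ≤ ∑ q : Fin n × Fin n,
            (p.2 q.1 * A q.1 q.2 * p.1 q.2) * X q ω}
          = ℙ {ω : Ω | thr/4 ≤ ∑ q : Fin n × Fin n,
            (p.2 q.1 * A q.1 q.2 * p.1 q.2) * X' q ω} := by
        refine measure_congr ?_
        have hae : ∀ᵐ ω ∂(ℙ : Measure Ω), ∀ q : Fin n × Fin n, X q ω = X' q ω :=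
          ae_all_iff.mpr hXeq
        filter_upwards [hae] with ω hω
        show (ω ∈ {ω : Ω | thr/4 ≤ ∑ q : Fin n × Fin n,
            (p.2 q.1 * A q.1 q.2 * p.1 q.2) * X q ω})
          = (ω ∈ {ω : Ω | thr/4 ≤ ∑ q : Fin n × Fin n,
            (p.2 q.1 * A q.1 q.2 * p.1 q.2) * X' q ω})
        have hsum : ∑ q : Fin n × Fin n, (p.2 q.1 * A q.1 q.2 * p.1 q.2) * X q ω
            = ∑ q : Fin n × Fin n, (p.2 q.1 * A q.1 q.2 * p.1 q.2) * X' q ω :=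
          Finset.sum_congr rfl fun q _ => by rw [hω q]
        simp only [Set.mem_setOf_eq, hsum]
      rw [hmc]
      exact chernoff_gaussian_sum hX'indep hX'meas hX'law
        (fun q => p.2 q.1 * A q.1 q.2 * p.1 q.2)
        (coef_bound A hA p.1 p.2 hx1 hy1) (div_pos hthr (by norm_num))
    refine le_trans (Finset.sum_le_sum hper) ?_
    rw [Finset.sum_const, nsmul_eq_mul]
    have hcardR : (((NE ×ˢ NF).card : ℕ) : ℝ)
        ≤ 9 ^ (Module.finrank ℝ E) * 9 ^ (Module.finrank ℝ F) := by
      rw [Finset.card_product]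
      push_cast
      exact mul_le_mul hNEcard hNFcard (Nat.cast_nonneg _) (pow_nonneg (by norm_num) _)
    have hnum := final_numeric (Module.finrank ℝ E) (Module.finrank ℝ F)
      ((NE ×ˢ NF).card) s hs hcardR
    have hthr4 : thr / 4 = 4 * s * (Real.sqrt (Module.finrank ℝ E)
        + Real.sqrt (Module.finrank ℝ F)) := by
      rw [hthr_def]; ring
    rw [hthr4]
    calc ((NE ×ˢ NF).card : ℝ≥0∞) * ENNReal.ofReal
          (Real.exp (-((4 * s * (Real.sqrt (Module.finrank ℝ E)
            + Real.sqrt (Module.finrank ℝ F)))^2)/2))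
        = ENNReal.ofReal ((((NE ×ˢ NF).card : ℕ) : ℝ) * Real.exp
            (-((4 * s * (Real.sqrt (Module.finrank ℝ E)
              + Real.sqrt (Module.finrank ℝ F)))^2)/2)) := by
          rw [ENNReal.ofReal_mul (by positivity), ENNReal.ofReal_natCast]
      _ ≤ ENNReal.ofReal (Real.exp (-1 * s ^ 2 * ((Module.finrank ℝ E : ℝ)
            + Module.finrank ℝ F))) := ENNReal.ofReal_le_ofReal hnum
end
end

section
/- Let A = (a_{i,j}) be an n×n matrix such that: (1) a_{i,j} ∈ {0} ∪ [r,1] for some constant r > 0 and all i,j; (2) every column j ∈ [n] of A has at least δn nonzero entries. Then for every subset J ⊆ [n] there exists a subset I ⊆ [n] of cardinality |I| ≥ (r²δ/2) n such that for every i ∈ I: Σ_{j∈J} a_{i,j}² ≥ (r²δ/2)·|J|. -/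
open MeasureTheory ProbabilityTheory Matrix Filter
open scoped ENNReal NNReal Classical

noncomputable section

/-- Lemma (dense subset of rows): if `A` has entries in `{0} ∪ [r,1]` and every
column has at least `δ n` nonzero entries, then for every `J ⊆ [n]` there is
`I ⊆ [n]` with `|I| ≥ (r²δ/2) n` such that `∑_{j ∈ J} a_{i,j}² ≥ (r²δ/2)|J|`
for every `i ∈ I`. -/
theorem dense_subset_of_rows (n : ℕ) (r δ : ℝ) (hr : 0 < r) (hδ : 0 < δ)
    (A : Matrix (Fin n) (Fin n) ℝ)
    (h1 : ∀ i j, A i j = 0 ∨ (r ≤ A i j ∧ A i j ≤ 1))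
    (h2 : ∀ j : Fin n, δ * n ≤ (Finset.univ.filter fun i : Fin n => A i j ≠ 0).card) :
    ∀ J : Finset (Fin n), ∃ I : Finset (Fin n),
      r ^ 2 * δ / 2 * n ≤ I.card ∧
      ∀ i ∈ I, r ^ 2 * δ / 2 * J.card ≤ ∑ j ∈ J, A i j ^ 2 := by

  intro J
  set c : ℝ := r ^ 2 * δ / 2 with hc
  set I := Finset.univ.filter (fun i : Fin n => c * (J.card : ℝ) ≤ ∑ j ∈ J, A i j ^ 2) with hIdef
  refine ⟨I, ?_, fun i hi => (Finset.mem_filter.mp hi).2⟩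
  by_cases hn : n = 0
  · subst hn; simp
  have hnpos : (0:ℝ) < n := Nat.cast_pos.mpr (Nat.pos_of_ne_zero hn)
  -- δ ≤ 1
  have hδ1 : δ ≤ 1 := by
    have h := h2 ⟨0, Nat.pos_of_ne_zero hn⟩
    have hle : ((Finset.univ.filter fun i : Fin n => A i ⟨0, Nat.pos_of_ne_zero hn⟩ ≠ 0).card : ℝ) ≤ n := by
      exact_mod_cast Finset.card_le_card (Finset.subset_univ _) |>.trans (le_of_eq (Finset.card_univ.trans (Fintype.card_fin n)))
    nlinarith
  -- r ≤ 1
  have hr1 : r ≤ 1 := by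
    have h := h2 ⟨0, Nat.pos_of_ne_zero hn⟩
    have hpos : (0:ℝ) < (Finset.univ.filter fun i : Fin n => A i ⟨0, Nat.pos_of_ne_zero hn⟩ ≠ 0).card := by
      nlinarith
    have : (Finset.univ.filter fun i : Fin n => A i ⟨0, Nat.pos_of_ne_zero hn⟩ ≠ 0).Nonempty := by
      rw [← Finset.card_pos]; exact_mod_cast hpos
    obtain ⟨i, hi⟩ := this
    have hne := (Finset.mem_filter.mp hi).2
    rcases h1 i ⟨0, Nat.pos_of_ne_zero hn⟩ with h | h
    · exact absurd h hne
    · linarith [h.1, h.2]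
  have hsq1 : ∀ i j, A i j ^ 2 ≤ 1 := by
    intro i j
    rcases h1 i j with h | h
    · rw [h]; norm_num
    · nlinarith [h.1, h.2]
  have hsq0 : ∀ i j, (0:ℝ) ≤ A i j ^ 2 := fun i j => sq_nonneg _
  by_cases hJ : J = ∅
  · subst hJ
    have hIuniv : I = Finset.univ := by
      rw [hIdef]
      apply Finset.filter_true_of_mem
      intro i _
      simp
    rw [hIuniv]
    have : ((Finset.univ : Finset (Fin n)).card : ℝ) = n := by simp
    rw [this, hc]
    have hr2 : r ^ 2 ≤ 1 := by nlinarith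
    have hle : r ^ 2 * δ / 2 ≤ 1 := by nlinarith
    nlinarith
  have hJpos : (0:ℝ) < J.card := by
    exact_mod_cast Finset.card_pos.mpr (Finset.nonempty_iff_ne_empty.mpr hJ)
  -- lower bound on total sum
  have lower : r ^ 2 * δ * n * J.card ≤ ∑ j ∈ J, ∑ i, A i j ^ 2 := by
    have : ∀ j ∈ J, r ^ 2 * δ * n ≤ ∑ i, A i j ^ 2 := by
      intro j _
      have h2j := h2 j
      have step1 : r ^ 2 * (δ * n) ≤ r ^ 2 * ((Finset.univ.filter fun i : Fin n => A i j ≠ 0).card : ℝ) :=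
        mul_le_mul_of_nonneg_left h2j (sq_nonneg r)
      have step2 : r ^ 2 * ((Finset.univ.filter fun i : Fin n => A i j ≠ 0).card : ℝ)
          ≤ ∑ i ∈ Finset.univ.filter (fun i : Fin n => A i j ≠ 0), A i j ^ 2 := by
        calc r ^ 2 * ((Finset.univ.filter fun i : Fin n => A i j ≠ 0).card : ℝ)
            = ∑ _i ∈ Finset.univ.filter (fun i : Fin n => A i j ≠ 0), r ^ 2 := by
              rw [Finset.sum_const, nsmul_eq_mul, mul_comm]
          _ ≤ _ := by
              apply Finset.sum_le_sum
              intro i hi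
              have hne := (Finset.mem_filter.mp hi).2
              rcases h1 i j with h | h
              · exact absurd h hne
              · nlinarith [h.1]
      have step3 : ∑ i ∈ Finset.univ.filter (fun i : Fin n => A i j ≠ 0), A i j ^ 2 ≤ ∑ i, A i j ^ 2 :=
        Finset.sum_le_sum_of_subset_of_nonneg (Finset.filter_subset _ _) (fun i _ _ => hsq0 i j)
      linarith [step1, step2, step3]
    calc r ^ 2 * δ * n * J.card = ∑ _j ∈ J, r ^ 2 * δ * n := by
          rw [Finset.sum_const, nsmul_eq_mul, mul_comm]
      _ ≤ _ := Finset.sum_le_sum this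
  have swap : ∑ j ∈ J, ∑ i, A i j ^ 2 = ∑ i, ∑ j ∈ J, A i j ^ 2 := Finset.sum_comm
  -- upper bound
  have hsplit := Finset.sum_filter_add_sum_filter_not Finset.univ
    (fun i : Fin n => c * (J.card : ℝ) ≤ ∑ j ∈ J, A i j ^ 2) (fun i => ∑ j ∈ J, A i j ^ 2)
  have upI : ∑ i ∈ I, ∑ j ∈ J, A i j ^ 2 ≤ (I.card : ℝ) * J.card := by
    calc ∑ i ∈ I, ∑ j ∈ J, A i j ^ 2 ≤ ∑ _i ∈ I, (J.card : ℝ) := by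
          apply Finset.sum_le_sum
          intro i _
          calc ∑ j ∈ J, A i j ^ 2 ≤ ∑ _j ∈ J, (1:ℝ) := Finset.sum_le_sum (fun j _ => hsq1 i j)
            _ = J.card := by simp
      _ = (I.card : ℝ) * J.card := by rw [Finset.sum_const, nsmul_eq_mul]
  have upIc : ∑ i ∈ Finset.univ.filter (fun i : Fin n => ¬ (c * (J.card : ℝ) ≤ ∑ j ∈ J, A i j ^ 2)),
      ∑ j ∈ J, A i j ^ 2 ≤ (n : ℝ) * (c * J.card) := by
    set Ic := Finset.univ.filter (fun i : Fin n => ¬ (c * (J.card : ℝ) ≤ ∑ j ∈ J, A i j ^ 2)) with hIc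
    have hcard : (Ic.card : ℝ) ≤ n := by
      have := Finset.card_le_card (Finset.subset_univ Ic)
      simp only [Finset.card_univ, Fintype.card_fin] at this
      exact_mod_cast this
    have hcpos : 0 ≤ c * (J.card : ℝ) := by
      have : 0 ≤ c := by rw [hc]; positivity
      positivity
    calc ∑ i ∈ Ic, ∑ j ∈ J, A i j ^ 2 ≤ ∑ _i ∈ Ic, c * (J.card : ℝ) := by
          apply Finset.sum_le_sum
          intro i hi
          exact le_of_lt (not_le.mp (Finset.mem_filter.mp hi).2)
      _ = (Ic.card : ℝ) * (c * J.card) := by rw [Finset.sum_const, nsmul_eq_mul]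
      _ ≤ (n : ℝ) * (c * J.card) := mul_le_mul_of_nonneg_right hcard hcpos
  have key : r ^ 2 * δ * n * J.card ≤ (I.card : ℝ) * J.card + n * (c * J.card) := by
    rw [swap, ← hsplit] at lower
    calc r ^ 2 * δ * n * J.card ≤ _ := lower
      _ ≤ _ := add_le_add upI upIc
  rw [hc] at key ⊢
  nlinarith [key, hJpos]
end
end
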